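/- Let q be a nonzero complex number with q² ≠ 1, let A be an associative unital ℂ-algebra, and let (h_s)_{s≥1} and (F_m)_{m≥0} be families of elements of A satisfying h_s F_m − F_m h_s = −(q^s[s]/s)·F_{m+s} for all s ≥ 1 and m ≥ 0. Set H(z) := (q−q^{−1}) ∑_{s≥1} h_s z^s ∈ A[[z]]. Then for every n ≥ 0, the identity exp(H(z)) · F_n · exp(−H(z)) = F_n + (1−q²) ∑_{m≥1} F_{n+m} z^m holds in A[[z]]. -/

import Mathlib

/-- The `q`-integer `[s] = (q^s - q^{-s})/(q - q^{-1})`. -/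
noncomputable def qInt (q : ℂ) (s : ℕ) : ℂ := (q ^ s - q⁻¹ ^ s) / (q - q⁻¹)

/-- The formal exponential of a power series with coefficients in a `ℂ`-algebra
(intended for series with zero constant coefficient): `exp f = ∑_{k≥0} (1/k!) • f^k`. -/
noncomputable def formalExp (A : Type*) [Ring A] [Algebra ℂ A] (f : PowerSeries A) :
    PowerSeries A :=
  PowerSeries.mk fun n =>
    ∑ k ∈ Finset.range (n + 1), ((k.factorial : ℂ)⁻¹) • (PowerSeries.coeff n (f ^ k))

open PowerSeries Finset

theorem coeff_pow_zero_of_lt {B : Type*} [Ring B] (g : PowerSeries B)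
    (hg : constantCoeff g = 0) : ∀ (k i : ℕ), i < k → coeff i (g ^ k) = 0 := by
  intro k
  induction k with
  | zero => intro i hi; omega
  | succ k ih =>
    intro i hi
    rw [pow_succ, coeff_mul]
    apply Finset.sum_eq_zero
    rintro ⟨a, b⟩ hab
    rw [Finset.HasAntidiagonal.mem_antidiagonal] at hab
    rcases Nat.eq_zero_or_pos b with hb | hb
    · subst hb
      rw [coeff_zero_eq_constantCoeff, hg, mul_zero]
    · rw [ih a (by omega), zero_mul]

theorem triangle_to_square {M : Type*} [AddCommMonoid M] (N : ℕ) (u : ℕ → ℕ → M)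
    (hu : ∀ j m, N < j + m → u j m = 0) :
    ∑ k ∈ range (N + 1), ∑ j ∈ range (k + 1), u j (k - j)
      = ∑ j ∈ range (N + 1), ∑ m ∈ range (N + 1), u j m := by
  have key : ∀ k ∈ range (N + 1), ∑ j ∈ range (k + 1), u j (k - j)
      = ∑ j ∈ range (N + 1), ∑ m ∈ range (N + 1), if j + m = k then u j m else 0 := by
    intro k hk
    rw [mem_range] at hk
    rw [Finset.sum_comm]
    have inner : ∀ m ∈ range (N + 1), (∑ j ∈ range (N + 1), if j + m = k then u j m else 0)
        = if m ≤ k then u (k - m) m else 0 := by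
      intro m hm
      rw [mem_range] at hm
      rcases le_or_gt m k with hmk | hmk
      · rw [if_pos hmk]
        have : ∀ j ∈ range (N + 1), (if j + m = k then u j m else 0)
            = if j = k - m then u j m else 0 := by
          intro j _
          congr 1
          simp only [eq_iff_iff]
          omega
        rw [Finset.sum_congr rfl this, Finset.sum_ite_eq' (range (N + 1)) (k - m) (fun j => u j m),
          if_pos (by rw [mem_range]; omega)]
      · rw [if_neg (by omega)]
        apply Finset.sum_eq_zero
        intro j _
        rw [if_neg (by omega)]
    rw [Finset.sum_congr rfl inner]
    rw [← Finset.sum_range_reflect (fun j => u j (k - j)) (k + 1)]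
    rw [← Finset.sum_subset (Finset.range_subset_range.2 (by omega : k + 1 ≤ N + 1))]
    · apply Finset.sum_congr rfl
      intro m hm
      rw [mem_range] at hm
      rw [if_pos (by omega)]
      congr 1 <;> omega
    · intro m _ hm
      rw [mem_range] at hm
      rw [if_neg (by omega)]
  rw [Finset.sum_congr rfl key, Finset.sum_comm]
  apply Finset.sum_congr rfl
  intro j _
  rw [Finset.sum_comm]
  apply Finset.sum_congr rfl
  intro m hm
  rw [Finset.sum_ite_eq (range (N + 1)) (j + m) (fun _ => u j m)]
  rw [mem_range] at hm
  split
  · rfl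
  · rename_i hc
    rw [mem_range] at hc
    exact (hu j m (by omega)).symm

theorem pow_mul_expand {B : Type*} [Ring B] (u : B) (a : ℕ → B)
    (hc : ∀ j, u * a j = a j * u + a (j + 1)) (k : ℕ) :
    u ^ k * a 0 = ∑ j ∈ range (k + 1), (k.choose j) • (a j * u ^ (k - j)) := by
  induction k with
  | zero => simp
  | succ k ih =>
    have h1 : u ^ (k + 1) * a 0 = u * (u ^ k * a 0) := by rw [← mul_assoc, pow_succ']
    rw [h1, ih, Finset.mul_sum]
    have step : ∀ j ∈ range (k + 1), u * (k.choose j) • (a j * u ^ (k - j))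
        = (k.choose j) • (a j * u ^ (k + 1 - j)) + (k.choose j) • (a (j + 1) * u ^ (k - j)) := by
      intro j hj
      rw [mem_range] at hj
      rw [mul_smul_comm, ← mul_assoc, hc j, add_mul, smul_add, mul_assoc, ← pow_succ',
        show k - j + 1 = k + 1 - j from by omega]
    rw [Finset.sum_congr rfl step, Finset.sum_add_distrib]
    have re : (∑ j ∈ range (k + 2), if j = 0 then 0 else (k.choose (j - 1)) • (a j * u ^ (k + 1 - j)))
        = ∑ j ∈ range (k + 1), (k.choose j) • (a (j + 1) * u ^ (k - j)) := by
      rw [Finset.sum_range_succ' (fun j => if j = 0 then 0 else (k.choose (j - 1)) • (a j * u ^ (k + 1 - j))) (k + 1)]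
      simp [Nat.succ_sub_succ]
    rw [← re]
    have ext : ∑ j ∈ range (k + 2), (k.choose j) • (a j * u ^ (k + 1 - j))
        = ∑ j ∈ range (k + 1), (k.choose j) • (a j * u ^ (k + 1 - j)) := by
      rw [Finset.sum_range_succ, Nat.choose_succ_self, zero_smul, add_zero]
    rw [← ext, ← Finset.sum_add_distrib]
    apply Finset.sum_congr rfl
    intro j hj
    rcases Nat.eq_zero_or_pos j with rfl | hjpos
    · simp
    · rw [if_neg (by omega), ← add_nsmul]
      congr 1
      obtain ⟨i, rfl⟩ : ∃ i, j = i + 1 := ⟨j - 1, by omega⟩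
      rw [Nat.choose_succ_succ]
      simp [Nat.add_comm]

theorem coeff_mul_of_expand {A : Type*} [Ring A] [Algebra ℂ A]
    (N : ℕ) (E1 E2 : PowerSeries A) (P Q : ℕ → PowerSeries A) (c d : ℕ → ℂ)
    (hE1 : ∀ i, coeff i E1 = ∑ k ∈ range (i + 1), c k • coeff i (P k))
    (hE2 : ∀ l, coeff l E2 = ∑ m ∈ range (l + 1), d m • coeff l (Q m))
    (hP : ∀ k i, i < k → coeff i (P k) = 0)
    (hQ : ∀ m l, l < m → coeff l (Q m) = 0) :
    coeff N (E1 * E2) = ∑ k ∈ range (N + 1), ∑ m ∈ range (N + 1),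
      (c k * d m) • coeff N (P k * Q m) := by
  rw [coeff_mul, Finset.Nat.sum_antidiagonal_eq_sum_range_succ_mk]
  have main : ∀ i ∈ range (N + 1), coeff i E1 * coeff (N - i) E2
      = ∑ k ∈ range (N + 1), ∑ m ∈ range (N + 1),
          (c k * d m) • (coeff i (P k) * coeff (N - i) (Q m)) := by
    intro i hi
    rw [mem_range] at hi
    have e1 : coeff i E1 = ∑ k ∈ range (N + 1), c k • coeff i (P k) := by
      rw [hE1 i]
      apply Finset.sum_subset (Finset.range_subset_range.2 (by omega))
      intro k _ hk
      rw [mem_range] at hk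
      rw [hP k i (by omega), smul_zero]
    have e2 : coeff (N - i) E2 = ∑ m ∈ range (N + 1), d m • coeff (N - i) (Q m) := by
      rw [hE2 (N - i)]
      apply Finset.sum_subset (Finset.range_subset_range.2 (by omega))
      intro m _ hm
      rw [mem_range] at hm
      rw [hQ m (N - i) (by omega), smul_zero]
    rw [e1, e2, Finset.sum_mul]
    apply Finset.sum_congr rfl
    intro k _
    rw [Finset.mul_sum]
    apply Finset.sum_congr rfl
    intro m _
    rw [smul_mul_assoc, mul_smul_comm, smul_smul]
  rw [Finset.sum_congr rfl main, Finset.sum_comm]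
  apply Finset.sum_congr rfl
  intro k _
  rw [Finset.sum_comm]
  apply Finset.sum_congr rfl
  intro m _
  rw [← Finset.smul_sum]
  congr 1
  rw [coeff_mul, Finset.Nat.sum_antidiagonal_eq_sum_range_succ_mk]

theorem neg_one_pow_sub (k j : ℕ) (hj : j ≤ k) : ((-1 : ℂ)) ^ (k - j) = (-1) ^ k * (-1) ^ j := by
  obtain ⟨i, rfl⟩ : ∃ i, k = j + i := ⟨k - j, by omega⟩
  rw [show j + i - j = i from by omega, ← pow_add, show j + i + j = i + 2 * j from by omega,
    pow_add, pow_mul, neg_one_sq, one_pow, mul_one]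

theorem fact_inv_scalar (k j : ℕ) (hj : j ≤ k) :
    ((j.factorial : ℂ))⁻¹ * (((k - j).factorial : ℂ))⁻¹
      = ((k.factorial : ℂ))⁻¹ * (k.choose j : ℂ) := by
  rw [Nat.cast_choose ℂ hj]
  have h1 : (j.factorial : ℂ) ≠ 0 := Nat.cast_ne_zero.2 (Nat.factorial_ne_zero _)
  have h2 : ((k - j).factorial : ℂ) ≠ 0 := Nat.cast_ne_zero.2 (Nat.factorial_ne_zero _)
  have h3 : (k.factorial : ℂ) ≠ 0 := Nat.cast_ne_zero.2 (Nat.factorial_ne_zero _)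
  field_simp

theorem alt_sum_complex (k : ℕ) :
    ∑ j ∈ range (k + 1), ((-1 : ℂ)) ^ j * (k.choose j : ℂ) = if k = 0 then 1 else 0 := by
  have h := Int.alternating_sum_range_choose (n := k)
  have h2 := congrArg (fun z : ℤ => (z : ℂ)) h
  push_cast at h2
  simpa using h2

theorem scalar_sum (k : ℕ) :
    ∑ j ∈ range (k + 1), ((j.factorial : ℂ))⁻¹ * (((k - j).factorial : ℂ))⁻¹ * (-1) ^ (k - j)
      = if k = 0 then 1 else 0 := by
  have step : ∀ j ∈ range (k + 1),
      ((j.factorial : ℂ))⁻¹ * (((k - j).factorial : ℂ))⁻¹ * (-1) ^ (k - j)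
        = ((k.factorial : ℂ))⁻¹ * (-1) ^ k * ((-1) ^ j * (k.choose j : ℂ)) := by
    intro j hj
    rw [mem_range] at hj
    rw [fact_inv_scalar k j (by omega), neg_one_pow_sub k j (by omega)]
    ring
  rw [Finset.sum_congr rfl step, ← Finset.mul_sum, alt_sum_complex]
  rcases eq_or_ne k 0 with rfl | hk
  · simp
  · simp [hk]
theorem coeff_formalExp {A : Type*} [Ring A] [Algebra ℂ A] (f : PowerSeries A) (i : ℕ) :
    coeff i (formalExp A f) = ∑ k ∈ range (i + 1), ((k.factorial : ℂ)⁻¹) • coeff i (f ^ k) :=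
  coeff_mk _ _

theorem formalExp_mul_neg {A : Type*} [Ring A] [Algebra ℂ A] (f : PowerSeries A)
    (hf : constantCoeff f = 0) : formalExp A f * formalExp A (-f) = 1 := by
  have hf' : constantCoeff (-f) = 0 := by rw [map_neg, hf, neg_zero]
  ext N
  rw [coeff_mul_of_expand N _ _ (fun k => f ^ k) (fun m => (-f) ^ m)
      (fun k => (k.factorial : ℂ)⁻¹) (fun m => (m.factorial : ℂ)⁻¹)
      (coeff_formalExp f) (coeff_formalExp (-f))
      (fun k i hik => coeff_pow_zero_of_lt f hf k i hik)
      (fun m l hlm => coeff_pow_zero_of_lt (-f) hf' m l hlm)]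
  have hneg : ∀ k m : ℕ, coeff N (f ^ k * (-f) ^ m)
      = ((-1 : ℂ) ^ m) • coeff N (f ^ (k + m)) := by
    intro k m
    have e1 : (-f) ^ m = ((-1 : ℂ) ^ m) • f ^ m := by
      rw [← smul_pow]
      congr 1
      rw [neg_one_smul]
    rw [e1, mul_smul_comm, ← pow_add, LinearMap.map_smul_of_tower]
  have combine : ∀ k ∈ range (N + 1), ∀ m ∈ range (N + 1),
      ((k.factorial : ℂ)⁻¹ * (m.factorial : ℂ)⁻¹) • coeff N (f ^ k * (-f) ^ m)
        = ((k.factorial : ℂ)⁻¹ * ((m.factorial : ℂ))⁻¹ * (-1) ^ m) • coeff N (f ^ (k + m)) := by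
    intro k _ m _
    rw [hneg k m, smul_smul]
  rw [Finset.sum_congr rfl (fun k hk => Finset.sum_congr rfl (combine k hk))]
  have hvan : ∀ j m, N < j + m →
      ((j.factorial : ℂ)⁻¹ * ((m.factorial : ℂ))⁻¹ * (-1) ^ m) • coeff N (f ^ (j + m)) = 0 := by
    intro j m hjm
    rw [coeff_pow_zero_of_lt f hf (j + m) N hjm, smul_zero]
  rw [← triangle_to_square N _ hvan]
  have tri : ∀ k ∈ range (N + 1), ∑ j ∈ range (k + 1),
      ((j.factorial : ℂ)⁻¹ * (((k - j).factorial : ℂ))⁻¹ * (-1) ^ (k - j)) • coeff N (f ^ (j + (k - j)))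
      = (if k = 0 then (1 : ℂ) else 0) • coeff N (f ^ k) := by
    intro k _
    rw [← scalar_sum k, Finset.sum_smul]
    apply Finset.sum_congr rfl
    intro j hj
    rw [mem_range] at hj
    rw [show j + (k - j) = k from by omega]
  rw [Finset.sum_congr rfl tri]
  have : ∀ k ∈ range (N + 1), (if k = 0 then (1 : ℂ) else 0) • coeff N (f ^ k)
      = if k = 0 then coeff N (1 : PowerSeries A) else 0 := by
    intro k _
    rcases eq_or_ne k 0 with rfl | hk
    · simp
    · simp [hk]
  rw [Finset.sum_congr rfl this, Finset.sum_ite_eq' (range (N + 1)) 0 (fun _ => coeff N (1 : PowerSeries A)),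
    if_pos (by simp)]
section Conj

variable (q : ℂ) {A : Type*} [Ring A] [Algebra ℂ A] (h F : ℕ → A) (n : ℕ)

noncomputable def Hser : PowerSeries A :=
  PowerSeries.mk fun s => if s = 0 then 0 else (q - q⁻¹) • h s

noncomputable def phiSer : PowerSeries ℂ :=
  PowerSeries.mk fun s => if s = 0 then 0 else (1 - q ^ (2 * s)) / (s : ℂ)

noncomputable def Tmap (f : PowerSeries ℂ) : PowerSeries A :=
  PowerSeries.mk fun m => (PowerSeries.coeff m f) • F (n + m)

theorem scalar_id (hq : q ≠ 0) (hq2 : q ^ 2 ≠ 1) (s : ℕ) (hs : 1 ≤ s) :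
    (q - q⁻¹) * (-(q ^ s * qInt q s / (s : ℂ))) = (1 - q ^ (2 * s)) / (s : ℂ) := by
  have hne : q - q⁻¹ ≠ 0 := by
    intro hcon
    apply hq2
    have heq : q = q⁻¹ := by linear_combination hcon
    have h2 : q * q = 1 := by nth_rewrite 2 [heq]; exact mul_inv_cancel₀ hq
    rw [pow_two, h2]
  have hs0 : (s : ℂ) ≠ 0 := Nat.cast_ne_zero.2 (by omega)
  have hqs : q ^ s ≠ 0 := pow_ne_zero _ hq
  rw [qInt]
  have h2s : q ^ (2 * s) = q ^ s * q ^ s := by rw [two_mul, pow_add]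
  have key : q ^ s * ((q ^ s - q⁻¹ ^ s) / (q - q⁻¹)) * (q - q⁻¹) = q ^ s * q ^ s - 1 := by
    rw [mul_assoc, div_mul_cancel₀ _ hne, mul_sub, ← mul_pow q q⁻¹, mul_inv_cancel₀ hq, one_pow]
  calc (q - q⁻¹) * (-(q ^ s * ((q ^ s - q⁻¹ ^ s) / (q - q⁻¹)) / (s : ℂ)))
      = -(q ^ s * ((q ^ s - q⁻¹ ^ s) / (q - q⁻¹)) * (q - q⁻¹)) / (s : ℂ) := by ring
    _ = (1 - q ^ (2 * s)) / (s : ℂ) := by rw [key, h2s]; ring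


theorem Hser_mul_Tmap (hq : q ≠ 0) (hq2 : q ^ 2 ≠ 1)
    (hrel : ∀ s m : ℕ, 1 ≤ s →
      h s * F m - F m * h s = (-(q ^ s * qInt q s / (s : ℂ))) • F (m + s))
    (f : PowerSeries ℂ) :
    Hser q h * Tmap F n f = Tmap F n f * Hser q h + Tmap F n (phiSer q * f) := by
  ext N
  rw [map_add, coeff_mul, Finset.Nat.sum_antidiagonal_eq_sum_range_succ_mk]
  have hTH : coeff N (Tmap F n f * Hser q h)
      = ∑ i ∈ range (N + 1), coeff (N - i) (Tmap F n f) * coeff i (Hser q h) := by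
    rw [coeff_mul, ← Finset.Nat.sum_antidiagonal_swap,
      Finset.Nat.sum_antidiagonal_eq_sum_range_succ_mk]
    simp [Prod.swap]
  have hTphi : coeff N (Tmap F n (phiSer q * f))
      = ∑ i ∈ range (N + 1), (coeff i (phiSer q) * coeff (N - i) f) • F (n + N) := by
    rw [show coeff N (Tmap F n (phiSer q * f))
        = (coeff N (phiSer q * f)) • F (n + N) from coeff_mk _ _,
      coeff_mul, Finset.Nat.sum_antidiagonal_eq_sum_range_succ_mk, Finset.sum_smul]
  rw [hTH, hTphi, ← Finset.sum_add_distrib]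
  apply Finset.sum_congr rfl
  intro i hi
  rw [mem_range] at hi
  rcases eq_or_ne i 0 with rfl | hi0
  · simp [Hser, phiSer, coeff_mk]
  · have hc : coeff i (Hser q h) = (q - q⁻¹) • h i := by simp [Hser, coeff_mk, hi0]
    have hphi : coeff i (phiSer q) = (1 - q ^ (2 * i)) / (i : ℂ) := by
      simp [phiSer, coeff_mk, hi0]
    have hT : coeff (N - i) (Tmap F n f) = (coeff (N - i) f) • F (n + (N - i)) :=
      coeff_mk _ _
    rw [hc, hphi, hT]
    have hFh : h i * F (n + (N - i)) = F (n + (N - i)) * h i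
        + (-(q ^ i * qInt q i / (i : ℂ))) • F (n + (N - i) + i) :=
      sub_eq_iff_eq_add'.mp (hrel i (n + (N - i)) (by omega))
    have hidx : n + (N - i) + i = n + N := by omega
    rw [hidx] at hFh
    calc ((q - q⁻¹) • h i) * ((coeff (N - i) f) • F (n + (N - i)))
        = ((q - q⁻¹) * coeff (N - i) f) • (h i * F (n + (N - i))) := by
          rw [smul_mul_assoc, mul_smul_comm, smul_smul]
      _ = ((q - q⁻¹) * coeff (N - i) f) • (F (n + (N - i)) * h i)
          + ((q - q⁻¹) * coeff (N - i) f) • ((-(q ^ i * qInt q i / (i : ℂ))) • F (n + N)) := by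
          rw [hFh, smul_add]
      _ = (coeff (N - i) f) • F (n + (N - i)) * ((q - q⁻¹) • h i)
          + ((1 - q ^ (2 * i)) / (i : ℂ) * coeff (N - i) f) • F (n + N) := by
          congr 1
          · rw [smul_mul_assoc, mul_smul_comm, smul_smul, mul_comm (q - q⁻¹)]
          · rw [smul_smul, ← scalar_id q hq hq2 i (by omega)]
            ring_nf
theorem coeff_mul_eq_zero_of_orders {B : Type*} [Ring B] (g1 g2 : PowerSeries B) (j m N : ℕ)
    (h1 : ∀ i, i < j → coeff i g1 = 0) (h2 : ∀ l, l < m → coeff l g2 = 0)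
    (hN : N < j + m) : coeff N (g1 * g2) = 0 := by
  rw [coeff_mul]
  apply Finset.sum_eq_zero
  rintro ⟨a, b⟩ hab
  rw [Finset.HasAntidiagonal.mem_antidiagonal] at hab
  rcases lt_or_ge a j with ha | ha
  · rw [h1 a ha, zero_mul]
  · rw [h2 b (by omega), mul_zero]

theorem constantCoeff_phiSer : constantCoeff (phiSer q) = 0 := by
  rw [← coeff_zero_eq_constantCoeff]
  simp [phiSer, coeff_mk]

theorem constantCoeff_Hser : constantCoeff (Hser q h) = 0 := by
  rw [← coeff_zero_eq_constantCoeff]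
  simp [Hser, coeff_mk]

theorem coeff_Tmap (f : PowerSeries ℂ) (m : ℕ) :
    coeff m (Tmap F n f) = (coeff m f) • F (n + m) := coeff_mk _ _

theorem coeff_Tmap_pow_lt (j i : ℕ) (hij : i < j) :
    coeff i (Tmap F n ((phiSer q) ^ j)) = 0 := by
  rw [coeff_Tmap, coeff_pow_zero_of_lt _ (constantCoeff_phiSer q) j i hij, zero_smul]

theorem Tmap_one : Tmap F n (1 : PowerSeries ℂ) = C (F n) := by
  ext m
  rw [coeff_Tmap, coeff_one, coeff_C]
  rcases eq_or_ne m 0 with rfl | hm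
  · simp
  · simp [hm]

theorem expH_mul_C (hq : q ≠ 0) (hq2 : q ^ 2 ≠ 1)
    (hrel : ∀ s m : ℕ, 1 ≤ s →
      h s * F m - F m * h s = (-(q ^ s * qInt q s / (s : ℂ))) • F (m + s)) :
    formalExp A (Hser q h) * C (F n)
      = Tmap F n (formalExp ℂ (phiSer q)) * formalExp A (Hser q h) := by
  have hcomm : ∀ j, Hser q h * Tmap F n ((phiSer q) ^ j)
      = Tmap F n ((phiSer q) ^ j) * Hser q h + Tmap F n ((phiSer q) ^ (j + 1)) := by
    intro j
    rw [Hser_mul_Tmap q h F n hq hq2 hrel ((phiSer q) ^ j), pow_succ']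
  ext N
  have lhs : coeff N (formalExp A (Hser q h) * C (F n))
      = ∑ k ∈ range (N + 1), ∑ j ∈ range (k + 1),
          ((j.factorial : ℂ)⁻¹ * (((k - j).factorial : ℂ))⁻¹) •
            coeff N (Tmap F n ((phiSer q) ^ j) * (Hser q h) ^ (k - j)) := by
    rw [coeff_mul_C, coeff_formalExp, Finset.sum_mul]
    apply Finset.sum_congr rfl
    intro k hk
    rw [mem_range] at hk
    rw [smul_mul_assoc, ← coeff_mul_C, show C (F n) = Tmap F n ((phiSer q) ^ 0) from by
        rw [pow_zero, Tmap_one],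
      pow_mul_expand (Hser q h) (fun j => Tmap F n ((phiSer q) ^ j)) hcomm k,
      map_sum, Finset.smul_sum]
    apply Finset.sum_congr rfl
    intro j hj
    rw [mem_range] at hj
    rw [map_nsmul, ← Nat.cast_smul_eq_nsmul ℂ, smul_smul, fact_inv_scalar k j (by omega)]
  rw [lhs]
  have hvan : ∀ j m, N < j + m →
      ((j.factorial : ℂ)⁻¹ * ((m.factorial : ℂ))⁻¹) •
        coeff N (Tmap F n ((phiSer q) ^ j) * (Hser q h) ^ m) = 0 := by
    intro j m hjm
    rw [coeff_mul_eq_zero_of_orders _ _ j m N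
      (fun i hi => coeff_Tmap_pow_lt q F n j i hi)
      (fun l hl => coeff_pow_zero_of_lt _ (constantCoeff_Hser q h) m l hl) hjm, smul_zero]
  rw [triangle_to_square N _ hvan]
  rw [coeff_mul_of_expand N _ _ (fun j => Tmap F n ((phiSer q) ^ j)) (fun m => (Hser q h) ^ m)
      (fun j => (j.factorial : ℂ)⁻¹) (fun m => (m.factorial : ℂ)⁻¹)
      (fun i => by
        rw [coeff_Tmap, coeff_formalExp, Finset.sum_smul]
        apply Finset.sum_congr rfl
        intro j _
        rw [smul_assoc, coeff_Tmap])
      (coeff_formalExp _)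
      (fun j i hi => coeff_Tmap_pow_lt q F n j i hi)
      (fun m l hl => coeff_pow_zero_of_lt _ (constantCoeff_Hser q h) m l hl)]

theorem formalExp_deriv (φ : PowerSeries ℂ) (hφ : constantCoeff φ = 0) :
    (d⁄dX ℂ) (formalExp ℂ φ) = (d⁄dX ℂ) φ * formalExp ℂ φ := by
  ext m
  rw [coeff_derivative, coeff_formalExp, Finset.sum_mul, Finset.sum_range_succ' _ (m + 1)]
  have g0 : ((Nat.factorial 0 : ℂ))⁻¹ • coeff (m + 1) (φ ^ 0) * ((m : ℕ) + 1 : ℂ) = 0 := by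
    rw [pow_zero, coeff_one, if_neg (Nat.succ_ne_zero m)]
    simp
  rw [g0, add_zero]
  have lhs_term : ∀ j ∈ range (m + 1),
      (((j + 1).factorial : ℂ))⁻¹ • coeff (m + 1) (φ ^ (j + 1)) * ((m : ℕ) + 1 : ℂ)
        = (j.factorial : ℂ)⁻¹ * coeff m ((d⁄dX ℂ) φ * φ ^ j) := by
    intro j _
    rw [smul_eq_mul, mul_assoc, ← coeff_derivative, Derivation.leibniz_pow, smul_eq_mul,
      show j + 1 - 1 = j from rfl, map_nsmul, nsmul_eq_mul, mul_comm (φ ^ j)]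
    have h1 : ((j : ℂ) + 1) ≠ 0 := Nat.cast_add_one_ne_zero j
    have h2 : (j.factorial : ℂ) ≠ 0 := Nat.cast_ne_zero.2 (Nat.factorial_ne_zero _)
    rw [Nat.factorial_succ]
    push_cast
    field_simp
  rw [Finset.sum_congr rfl lhs_term]
  rw [coeff_mul, Finset.Nat.sum_antidiagonal_eq_sum_range_succ_mk]
  have expand : ∀ i ∈ range (m + 1),
      coeff i ((d⁄dX ℂ) φ) * coeff (m - i) (formalExp ℂ φ)
        = ∑ j ∈ range (m + 1),
            (j.factorial : ℂ)⁻¹ * (coeff i ((d⁄dX ℂ) φ) * coeff (m - i) (φ ^ j)) := by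
    intro i hi
    rw [mem_range] at hi
    rw [coeff_formalExp]
    rw [Finset.sum_subset (Finset.range_subset_range.2 (by omega : m - i + 1 ≤ m + 1))
      (fun k _ hk => by
        rw [coeff_pow_zero_of_lt φ hφ k (m - i)
          (by rw [mem_range] at hk; omega), smul_zero])]
    rw [Finset.mul_sum]
    apply Finset.sum_congr rfl
    intro j _
    rw [smul_eq_mul]
    ring
  rw [Finset.sum_congr rfl expand, Finset.sum_comm]
  apply Finset.sum_congr rfl
  intro j _
  rw [← Finset.mul_sum, coeff_mul, Finset.Nat.sum_antidiagonal_eq_sum_range_succ_mk]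

theorem geom_aux (m : ℕ) :
    ∑ i ∈ range (m + 1), (1 - q ^ (2 * (i + 1))) * (if m - i = 0 then (1 : ℂ) else 1 - q ^ 2)
      = ((m : ℂ) + 1) * (1 - q ^ 2) := by
  rw [Finset.sum_range_succ]
  have hlast : (1 - q ^ (2 * (m + 1))) * (if m - m = 0 then (1 : ℂ) else 1 - q ^ 2)
      = 1 - q ^ 2 * (q ^ 2) ^ m := by
    have : q ^ (2 * (m + 1)) = q ^ 2 * (q ^ 2) ^ m := by
      rw [← pow_mul, ← pow_add]
      congr 1
      omega
    simp [this]
  have hrest : ∀ i ∈ range m,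
      (1 - q ^ (2 * (i + 1))) * (if m - i = 0 then (1 : ℂ) else 1 - q ^ 2)
        = (1 - q ^ 2 * (q ^ 2) ^ i) * (1 - q ^ 2) := by
    intro i hi
    rw [mem_range] at hi
    rw [if_neg (by omega)]
    congr 2
    rw [← pow_mul, ← pow_add]
    congr 1
    omega
  rw [hlast, Finset.sum_congr rfl hrest, ← Finset.sum_mul]
  have hgs : (∑ i ∈ range m, (q ^ 2) ^ i) * (q ^ 2 - 1) = (q ^ 2) ^ m - 1 := geom_sum_mul _ _
  have hsum : ∑ i ∈ range m, (1 - q ^ 2 * (q ^ 2) ^ i)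
      = (m : ℂ) - q ^ 2 * ∑ i ∈ range m, (q ^ 2) ^ i := by
    rw [Finset.sum_sub_distrib, Finset.sum_const, card_range, nsmul_eq_mul, mul_one,
      Finset.mul_sum]
  rw [hsum]
  linear_combination q ^ 2 * hgs

theorem coeff_expPhi (m : ℕ) :
    coeff m (formalExp ℂ (phiSer q)) = if m = 0 then 1 else 1 - q ^ 2 := by
  induction m using Nat.strong_induction_on with
  | _ m ih =>
    cases m with
    | zero =>
      rw [if_pos rfl, coeff_formalExp]
      simp
    | succ m' =>
      have hrec : coeff m' ((d⁄dX ℂ) (formalExp ℂ (phiSer q)))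
          = coeff m' ((d⁄dX ℂ) (phiSer q) * formalExp ℂ (phiSer q)) := by
        rw [formalExp_deriv (phiSer q) (constantCoeff_phiSer q)]
      rw [coeff_derivative, coeff_mul, Finset.Nat.sum_antidiagonal_eq_sum_range_succ_mk] at hrec
      have hterm : ∀ i ∈ range (m' + 1),
          coeff i ((d⁄dX ℂ) (phiSer q)) * coeff (m' - i) (formalExp ℂ (phiSer q))
            = (1 - q ^ (2 * (i + 1))) * (if m' - i = 0 then (1 : ℂ) else 1 - q ^ 2) := by
        intro i hi
        rw [mem_range] at hi
        rw [coeff_derivative, ih (m' - i) (by omega)]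
        congr 1
        have hco : coeff (i + 1) (phiSer q) = (1 - q ^ (2 * (i + 1))) / ((i : ℕ) + 1 : ℂ) := by
          simp [phiSer, coeff_mk]
        rw [hco]
        push_cast
        rw [div_mul_cancel₀]
        exact Nat.cast_add_one_ne_zero i
      rw [Finset.sum_congr rfl hterm, geom_aux] at hrec
      rw [if_neg (Nat.succ_ne_zero m')]
      have hc : ((m' : ℂ) + 1) ≠ 0 := Nat.cast_add_one_ne_zero m'
      push_cast at hrec
      rw [mul_comm ((m' : ℂ) + 1)] at hrec
      exact mul_right_cancel₀ hc hrec

end Conj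

/-- Let `q ≠ 0` with `q² ≠ 1`, `A` an associative unital `ℂ`-algebra, and
`(h_s)_{s≥1}`, `(F_m)_{m≥0}` families in `A` with
`h_s F_m − F_m h_s = −(q^s[s]/s) • F_{m+s}` for `s ≥ 1`, `m ≥ 0`.
With `H(z) = (q−q⁻¹) ∑_{s≥1} h_s z^s`, for every `n ≥ 0` one has
`exp(H(z)) · F_n · exp(−H(z)) = F_n + (1−q²) ∑_{m≥1} F_{n+m} z^m` in `A[[z]]`. -/
theorem conjugation_by_expH (q : ℂ) (hq : q ≠ 0) (hq2 : q ^ 2 ≠ 1)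
    (A : Type*) [Ring A] [Algebra ℂ A] (h F : ℕ → A)
    (hrel : ∀ s m : ℕ, 1 ≤ s →
      h s * F m - F m * h s = (-(q ^ s * qInt q s / (s : ℂ))) • F (m + s))
    (n : ℕ) :
    formalExp A (PowerSeries.mk fun s => if s = 0 then 0 else (q - q⁻¹) • h s)
        * PowerSeries.C (F n)
        * formalExp A (- PowerSeries.mk fun s => if s = 0 then 0 else (q - q⁻¹) • h s)
      = PowerSeries.mk fun m => if m = 0 then F n else (1 - q ^ 2) • F (n + m) := by
  have hG : Tmap F n (formalExp ℂ (phiSer q))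
      = PowerSeries.mk fun m => if m = 0 then F n else (1 - q ^ 2) • F (n + m) := by
    ext m
    rw [coeff_Tmap, coeff_expPhi q m, coeff_mk]
    rcases eq_or_ne m 0 with rfl | hm
    · simp
    · simp [hm]
  show formalExp A (Hser q h) * PowerSeries.C (F n) * formalExp A (-(Hser q h)) = _
  rw [expH_mul_C q h F n hq hq2 hrel, mul_assoc,
    formalExp_mul_neg _ (constantCoeff_Hser q h), mul_one, hG]
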